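/- Let γ = [[a,b],[c,d]] ∈ SL(2,ℤ), τ ∈ ℍ, τ' = (aτ+b)/(cτ+d), and let (s',r') = (s,r)·γ^{-1}. Suppose (r,s) ∈ ℂ² satisfies r + sτ ∉ Λ_τ. Then r' + s'τ' ∉ Λ_{τ'} and Z^{(2)}_{r',s'}(τ') = (cτ+d)³ Z^{(2)}_{r,s}(τ). -/

import Mathlib

open Complex

noncomputable section

/-- The lattice point `m + n·τ` for `ω = (m, n)`. -/
def latticePt (τ : ℂ) (ω : ℤ × ℤ) : ℂ := (ω.1 : ℂ) + (ω.2 : ℂ) * τ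

/-- `z ∈ Λ_τ = ℤ + ℤτ`. -/
def InLattice (τ z : ℂ) : Prop := ∃ m n : ℤ, z = (m : ℂ) + (n : ℂ) * τ

/-- The Weierstrass elliptic function `℘(z|τ)`. -/
def wp (τ z : ℂ) : ℂ :=
  1 / z ^ 2 + ∑' ω : ℤ × ℤ,
    if ω = 0 then 0 else 1 / (z - latticePt τ ω) ^ 2 - 1 / latticePt τ ω ^ 2

/-- `℘'(z|τ)`, the derivative of `℘` in `z`. -/
def wpDeriv (τ z : ℂ) : ℂ := deriv (wp τ) z

/-- The Weierstrass zeta function `ζ(z|τ)`. -/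
def wzeta (τ z : ℂ) : ℂ :=
  1 / z + ∑' ω : ℤ × ℤ,
    if ω = 0 then 0 else 1 / (z - latticePt τ ω) + 1 / latticePt τ ω + z / latticePt τ ω ^ 2

/-- The quasi-period `η₁(τ) = 2ζ(1/2|τ)`. -/
def eta1 (τ : ℂ) : ℂ := 2 * wzeta τ (1 / 2)

/-- The quasi-period `η₂(τ) = 2ζ(τ/2|τ)`. -/
def eta2 (τ : ℂ) : ℂ := 2 * wzeta τ (τ / 2)

/-- The invariant `g₂(τ)`. -/
def gTwo (τ : ℂ) : ℂ := 60 * ∑' ω : ℤ × ℤ, if ω = 0 then 0 else 1 / latticePt τ ω ^ 4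

/-- The Hecke-type form `Z_{r,s}(τ)`. -/
def Zrs (r s τ : ℂ) : ℂ := wzeta τ (r + s * τ) - r * eta1 τ - s * eta2 τ

/-- The premodular form `Z^{(2)}_{r,s}(τ)`. -/
def Z2 (r s τ : ℂ) : ℂ :=
  Zrs r s τ ^ 3 - 3 * wp τ (r + s * τ) * Zrs r s τ - wpDeriv τ (r + s * τ)

/-- `(r, s) ∈ (½ℤ)²`. -/
def HalfInt (r s : ℂ) : Prop := (∃ m : ℤ, r = (m : ℂ) / 2) ∧ (∃ n : ℤ, s = (n : ℂ) / 2)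

end

namespace Z2Aux

noncomputable section

/-- The complex absolute value, as an absolute value. -/
def Complex.abs : AbsoluteValue ℂ ℝ where
  toFun := fun z => ‖z‖
  map_mul' := norm_mul
  nonneg' := norm_nonneg
  eq_zero' := fun _ => norm_eq_zero
  add_le' := norm_add_le

lemma Complex.norm_eq_abs (z : ℂ) : ‖z‖ = Complex.abs z := rfl

@[simp]
lemma Complex.abs_ofNat (n : ℕ) [n.AtLeastTwo] :
    Complex.abs (no_index (OfNat.ofNat n : ℂ)) = OfNat.ofNat n := by
  show ‖(OfNat.ofNat n : ℂ)‖ = _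
  simp

lemma latticePt_add (τ : ℂ) (ω e : ℤ × ℤ) :
    latticePt τ (ω + e) = latticePt τ ω + latticePt τ e := by
  simp only [latticePt, Prod.fst_add, Prod.snd_add]
  push_cast; ring

lemma latticePt_neg (τ : ℂ) (ω : ℤ × ℤ) : latticePt τ (-ω) = -latticePt τ ω := by
  simp only [latticePt, Prod.fst_neg, Prod.snd_neg]
  push_cast; ring

lemma latticePt_inj {τ : ℂ} (hτ : 0 < τ.im) : Function.Injective (latticePt τ) := by
  rintro ⟨m1, n1⟩ ⟨m2, n2⟩ h
  have him : (n1 : ℝ) * τ.im = (n2 : ℝ) * τ.im := by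
    have := congrArg Complex.im h
    simpa [latticePt, Complex.add_im, Complex.mul_im] using this
  have hn : (n1 : ℝ) = n2 := by
    field_simp [hτ.ne'] at him
    exact_mod_cast him
  have hn' : n1 = n2 := by exact_mod_cast hn
  subst hn'
  have hre := congrArg Complex.re h
  simp only [latticePt, Complex.add_re, Complex.mul_re, Complex.intCast_re,
    Complex.intCast_im] at hre
  have : (m1 : ℝ) = m2 := by linarith
  have : m1 = m2 := by exact_mod_cast this
  simp [this]

lemma latticePt_eq_zero_iff {τ : ℂ} (hτ : 0 < τ.im) {ω : ℤ × ℤ} :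
    latticePt τ ω = 0 ↔ ω = 0 := by
  constructor
  · intro h
    have : latticePt τ ω = latticePt τ 0 := by simpa [latticePt] using h
    exact latticePt_inj hτ this
  · rintro rfl; simp [latticePt]

/-- The norm lower bound via Eisenstein series machinery. -/
lemma exists_delta {τ : ℂ} (hτ : 0 < τ.im) :
    ∃ δ : ℝ, 0 < δ ∧ ∀ ω : ℤ × ℤ, ω ≠ 0 →
      δ * max ω.1.natAbs ω.2.natAbs ≤ Complex.abs (latticePt τ ω) := by
  set z : UpperHalfPlane := ⟨τ, hτ⟩
  refine ⟨EisensteinSeries.r z, EisensteinSeries.r_pos z, fun ω hω => ?_⟩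
  have hx : (![ω.2, ω.1] : Fin 2 → ℤ) ≠ 0 := by
    intro h
    apply hω
    have h1 := congrFun h 0
    have h2 := congrFun h 1
    simp at h1 h2
    exact Prod.ext h2 h1
  have h := EisensteinSeries.r_mul_max_le z hx
  rw [EisensteinSeries.norm_eq_max_natAbs] at h
  simp only [Matrix.cons_val_zero, Matrix.cons_val_one, Matrix.head_cons] at h
  have hz : (z : ℂ) = τ := rfl
  rw [hz] at h
  have he : ((ω.2 : ℂ) * τ + ω.1) = latticePt τ ω := by simp [latticePt]; ring
  rw [he] at h
  rw [max_comm] at h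
  exact_mod_cast h

lemma delta_le {τ : ℂ} {δ : ℝ} (hδ : 0 < δ)
    (h : ∀ ω : ℤ × ℤ, ω ≠ 0 → δ * ((max ω.1.natAbs ω.2.natAbs : ℕ) : ℝ) ≤
      Complex.abs (latticePt τ ω))
    {ω : ℤ × ℤ} (hω : ω ≠ 0) : δ ≤ Complex.abs (latticePt τ ω) := by
  refine le_trans ?_ (h ω hω)
  have hne : ω.1 ≠ 0 ∨ ω.2 ≠ 0 := by
    by_contra hc
    push_neg at hc
    exact hω (Prod.ext hc.1 hc.2)
  have h1 : 1 ≤ max ω.1.natAbs ω.2.natAbs := by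
    rcases hne with h | h <;> [exact le_max_of_le_left (by omega); exact le_max_of_le_right (by omega)]
  have h1' : (1:ℝ) ≤ ((max ω.1.natAbs ω.2.natAbs : ℕ) : ℝ) := by exact_mod_cast h1
  nlinarith

/-- Finiteness of lattice points in a bounded region. -/
lemma finite_small {τ : ℂ} (hτ : 0 < τ.im) (K : ℝ) :
    {ω : ℤ × ℤ | Complex.abs (latticePt τ ω) ≤ K}.Finite := by
  obtain ⟨δ, hδ, hb⟩ := exists_delta hτ
  set N : ℕ := Nat.ceil (K / δ)
  apply Set.Finite.subset (Set.finite_Icc ((-(N:ℤ), -(N:ℤ))) ((N:ℤ), (N:ℤ)))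
  rintro ⟨m, n⟩ h
  simp only [Set.mem_setOf_eq] at h
  by_cases h0 : ((m, n) : ℤ × ℤ) = 0
  · rw [h0]
    simp [Set.mem_Icc, Prod.le_def]
  have hmax : ((max m.natAbs n.natAbs : ℕ) : ℝ) ≤ K / δ := by
    have := (hb (m, n) h0).trans h
    rw [le_div_iff₀ hδ]
    nlinarith
  have hN : ((max m.natAbs n.natAbs : ℕ) : ℝ) ≤ N := hmax.trans (Nat.le_ceil _)
  have hNn : max m.natAbs n.natAbs ≤ N := by exact_mod_cast hN
  have hm : m.natAbs ≤ N := le_trans (le_max_left _ _) hNn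
  have hn : n.natAbs ≤ N := le_trans (le_max_right _ _) hNn
  simp only [Set.mem_Icc, Prod.le_def]
  refine ⟨⟨?_, ?_⟩, ?_, ?_⟩ <;> omega
def U (τ : ℂ) : Set ℂ := {z | ∀ ω, z ≠ latticePt τ ω}

lemma summable_master {τ : ℂ} (hτ : 0 < τ.im) :
    Summable (fun ω : ℤ × ℤ => (Complex.abs (latticePt τ ω))⁻¹ ^ 3) := by
  obtain ⟨δ, hδ, hb⟩ := exists_delta hτ
  set e : ℤ × ℤ ≃ (Fin 2 → ℤ) := (Equiv.prodComm ℤ ℤ).trans (finTwoArrowEquiv ℤ).symm with he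
  have hs : Summable fun (x : Fin 2 → ℤ) => ‖x‖ ^ (-(3:ℝ)) :=
    EisensteinSeries.summable_one_div_norm_rpow (by norm_num)
  have hs2 : Summable fun ω : ℤ × ℤ => δ⁻¹ ^ 3 * ‖e ω‖ ^ (-(3:ℝ)) :=
    ((e.summable_iff (f := fun x => ‖x‖ ^ (-(3:ℝ)))).2 hs).mul_left _
  apply Summable.of_nonneg_of_le (fun ω => by positivity) _ hs2
  intro ω
  by_cases h0 : ω = 0
  · subst h0
    have h00 : latticePt τ (0 : ℤ × ℤ) = 0 := by simp [latticePt]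
    rw [h00]
    simp only [map_zero, inv_zero]
    norm_num
    positivity
  · have hEω : e ω = ![ω.2, ω.1] := by
      rw [he]
      ext i
      fin_cases i <;> simp [finTwoArrowEquiv]
    have hnorm : ‖e ω‖ = ((max ω.1.natAbs ω.2.natAbs : ℕ) : ℝ) := by
      rw [hEω, EisensteinSeries.norm_eq_max_natAbs]
      simp only [Matrix.cons_val_zero, Matrix.cons_val_one, Matrix.head_cons]
      rw [max_comm]
    set M : ℝ := ((max ω.1.natAbs ω.2.natAbs : ℕ) : ℝ) with hM
    have hM1 : (1:ℝ) ≤ M := by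
      have hne : ω.1 ≠ 0 ∨ ω.2 ≠ 0 := by
        by_contra hc; push_neg at hc; exact h0 (Prod.ext hc.1 hc.2)
      have : 1 ≤ max ω.1.natAbs ω.2.natAbs := by
        rcases hne with h | h
        · exact le_max_of_le_left (by omega)
        · exact le_max_of_le_right (by omega)
      rw [hM]
      exact_mod_cast this
    have hM0 : (0:ℝ) < M := lt_of_lt_of_le one_pos hM1
    have hrpow : ‖e ω‖ ^ (-(3:ℝ)) = (M ^ 3)⁻¹ := by
      rw [hnorm, Real.rpow_neg hM0.le]
      congr 1
      rw [show ((3:ℝ)) = ((3:ℕ):ℝ) by norm_num, Real.rpow_natCast]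
    rw [hrpow]
    have hlb : δ * M ≤ Complex.abs (latticePt τ ω) := hb ω h0
    have hpos : 0 < δ * M := mul_pos hδ hM0
    have : (Complex.abs (latticePt τ ω))⁻¹ ≤ (δ * M)⁻¹ :=
      inv_anti₀ hpos hlb
    calc (Complex.abs (latticePt τ ω))⁻¹ ^ 3 ≤ ((δ * M)⁻¹) ^ 3 := by
          apply pow_le_pow_left₀ (by positivity) this
      _ = δ⁻¹ ^ 3 * (M ^ 3)⁻¹ := by
          rw [mul_inv]
          ring

lemma nice_ball {τ : ℂ} (hτ : 0 < τ.im) {z₀ : ℂ} (h : z₀ ∈ U τ) :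
    ∃ ε : ℝ, 0 < ε ∧ ε ≤ 1 ∧
      ∀ z ∈ Metric.closedBall z₀ ε, ∀ ω, ε ≤ Complex.abs (z - latticePt τ ω) := by
  have hfin := finite_small hτ (Complex.abs z₀ + 1)
  have hmem0 : (0 : ℤ × ℤ) ∈ hfin.toFinset := by
    simp only [Set.Finite.mem_toFinset, Set.mem_setOf_eq]
    have h00 : latticePt τ (0 : ℤ × ℤ) = 0 := by simp [latticePt]
    rw [h00, map_zero]
    positivity
  have hne : hfin.toFinset.Nonempty := ⟨0, hmem0⟩
  set m : ℝ := hfin.toFinset.inf' hne (fun ω => Complex.abs (z₀ - latticePt τ ω)) with hm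
  have hmpos : 0 < m := by
    rw [hm, Finset.lt_inf'_iff]
    intro ω _
    have : z₀ - latticePt τ ω ≠ 0 := sub_ne_zero_of_ne (h ω)
    simpa using (AbsoluteValue.pos Complex.abs this)
  refine ⟨min (1/2) (m/2), by positivity, by
    simp only [min_le_iff]; left; norm_num, ?_⟩
  intro z hz ω
  set ε := min (1/2) (m/2) with hε
  have hεm : ε ≤ m/2 := min_le_right _ _
  have hεh : ε ≤ 1/2 := min_le_left _ _
  have hdzz : Complex.abs (z - z₀) ≤ ε := by
    rw [Metric.mem_closedBall, Complex.dist_eq] at hz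
    exact hz
  by_cases hω : ω ∈ hfin.toFinset
  · have h1 : m ≤ Complex.abs (z₀ - latticePt τ ω) :=
      Finset.inf'_le _ hω
    have htri : Complex.abs (z₀ - latticePt τ ω) ≤
        Complex.abs (z₀ - z) + Complex.abs (z - latticePt τ ω) := by
      have := Complex.abs.sub_le z₀ z (latticePt τ ω)
      exact this
    have : Complex.abs (z₀ - z) = Complex.abs (z - z₀) := by
      rw [← neg_sub, map_neg_eq_map]
    linarith
  · simp only [Set.Finite.mem_toFinset, Set.mem_setOf_eq, not_le] at hω
    have habsz : Complex.abs z ≤ Complex.abs z₀ + ε := by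
      calc Complex.abs z = Complex.abs (z₀ + (z - z₀)) := by ring_nf
        _ ≤ Complex.abs z₀ + Complex.abs (z - z₀) := Complex.abs.add_le _ _
        _ ≤ Complex.abs z₀ + ε := by linarith
    have htri : Complex.abs (latticePt τ ω) ≤
        Complex.abs z + Complex.abs (z - latticePt τ ω) := by
      calc Complex.abs (latticePt τ ω) = Complex.abs (z - (z - latticePt τ ω)) := by ring_nf
        _ ≤ Complex.abs z + Complex.abs (z - latticePt τ ω) := by
            rw [sub_eq_add_neg]
            exact (Complex.abs.add_le _ _).trans (by rw [map_neg_eq_map])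
    linarith
lemma isOpen_U {τ : ℂ} (hτ : 0 < τ.im) : IsOpen (U τ) := by
  rw [Metric.isOpen_iff]
  intro z₀ hz₀
  obtain ⟨ε, hε, _, hb⟩ := nice_ball hτ hz₀
  refine ⟨ε, hε, fun z hz => ?_⟩
  intro ω heq
  have := hb z (Metric.ball_subset_closedBall hz) ω
  rw [heq, sub_self, map_zero] at this
  linarith

lemma preconnected_U (τ : ℂ) : IsPreconnected (U τ) := by
  have hU : U τ = (Set.range (latticePt τ))ᶜ := by
    ext z
    simp only [U, Set.mem_setOf_eq, Set.mem_compl_iff, Set.mem_range]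
    constructor
    · rintro h ⟨ω, rfl⟩; exact h ω rfl
    · intro h ω heq; exact h ⟨ω, heq.symm⟩
  rw [hU]
  exact ((Set.countable_range _).isConnected_compl_of_one_lt_rank
    (by rw [rank_real_complex]; norm_num)).isPreconnected

lemma U_add {τ : ℂ} {z : ℂ} (hz : z ∈ U τ) (e : ℤ × ℤ) : z + latticePt τ e ∈ U τ := by
  intro ω heq
  apply hz (ω - e)
  have : latticePt τ (ω - e) = latticePt τ ω - latticePt τ e := by
    simp only [latticePt, Prod.fst_sub, Prod.snd_sub]
    push_cast
    ring
  rw [this, ← heq]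
  ring

lemma U_neg {τ : ℂ} {z : ℂ} (hz : z ∈ U τ) : -z ∈ U τ := by
  intro ω heq
  apply hz (-ω)
  rw [latticePt_neg, ← heq, neg_neg]

lemma U_ne_zero {τ : ℂ} {z : ℂ} (hz : z ∈ U τ) : z ≠ 0 := by
  have := hz 0
  simpa [latticePt] using this

lemma U_sub_ne {τ : ℂ} {z : ℂ} (hz : z ∈ U τ) (ω : ℤ × ℤ) : z - latticePt τ ω ≠ 0 :=
  sub_ne_zero_of_ne (hz ω)

/-- The summand of `℘`. -/
def pt (τ : ℂ) (ω : ℤ × ℤ) (z : ℂ) : ℂ :=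
  if ω = 0 then 0 else 1 / (z - latticePt τ ω) ^ 2 - 1 / latticePt τ ω ^ 2

/-- The summand of `ζ`. -/
def zt (τ : ℂ) (ω : ℤ × ℤ) (z : ℂ) : ℂ :=
  if ω = 0 then 0 else 1 / (z - latticePt τ ω) + 1 / latticePt τ ω + z / latticePt τ ω ^ 2

/-- The summand of `℘'`. -/
def pt' (τ : ℂ) (ω : ℤ × ℤ) (z : ℂ) : ℂ :=
  if ω = 0 then 0 else -2 / (z - latticePt τ ω) ^ 3

lemma hasDerivAt_zt {τ : ℂ} {z : ℂ} (ω : ℤ × ℤ)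
    (hz : ∀ ω', z ≠ latticePt τ ω') (hτ : 0 < τ.im) :
    HasDerivAt (zt τ ω) (-(pt τ ω z)) z := by
  by_cases h0 : ω = 0
  · subst h0
    have e1 : zt τ 0 = fun _ : ℂ => (0:ℂ) := funext fun w => by simp [zt]
    have e2 : pt τ 0 z = 0 := by simp [pt]
    rw [e1, e2, neg_zero]
    exact hasDerivAt_const z 0
  · set Λ := latticePt τ ω with hΛdef
    have hΛ : Λ ≠ 0 := fun h => h0 ((latticePt_eq_zero_iff hτ).1 h)
    have hzΛ : z - Λ ≠ 0 := sub_ne_zero_of_ne (hz ω)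
    have h1 : HasDerivAt (fun w : ℂ => 1 / (w - Λ)) (-1 / (z - Λ) ^ 2) z := by
      simp only [one_div]
      have := ((hasDerivAt_id z).sub_const Λ).inv hzΛ
      exact this.congr_deriv (by simp)
    have h2 : HasDerivAt (fun w : ℂ => 1 / Λ) 0 z := hasDerivAt_const z _
    have h3 : HasDerivAt (fun w : ℂ => w / Λ ^ 2) (1 / Λ ^ 2) z := by
      simpa using (hasDerivAt_id z).div_const (Λ ^ 2)
    have key := (h1.add h2).add h3
    have hfun : zt τ ω = fun w : ℂ => 1 / (w - Λ) + 1 / Λ + w / Λ ^ 2 := by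
      funext w; simp only [zt, if_neg h0, hΛdef]
    rw [hfun]
    refine key.congr_deriv (Eq.symm ?_)
    simp only [pt, if_neg h0, hΛdef]
    ring

lemma hasDerivAt_pt {τ : ℂ} {z : ℂ} (ω : ℤ × ℤ)
    (hz : ∀ ω', z ≠ latticePt τ ω') (hτ : 0 < τ.im) :
    HasDerivAt (pt τ ω) (pt' τ ω z) z := by
  by_cases h0 : ω = 0
  · subst h0
    have e1 : pt τ 0 = fun _ : ℂ => (0:ℂ) := funext fun w => by simp [pt]
    have e2 : pt' τ 0 z = 0 := by simp [pt']
    rw [e1, e2]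
    exact hasDerivAt_const z 0
  · set Λ := latticePt τ ω with hΛdef
    have hzΛ : z - Λ ≠ 0 := sub_ne_zero_of_ne (hz ω)
    have hfun : pt τ ω = fun w : ℂ => 1 / (w - Λ) ^ 2 - 1 / Λ ^ 2 := by
      funext w; simp only [pt, if_neg h0, hΛdef]
    have hval : pt' τ ω z = -2 / (z - Λ) ^ 3 := by simp only [pt', if_neg h0, hΛdef]
    rw [hfun, hval]
    have h1 : HasDerivAt (fun w : ℂ => (w - Λ) ^ 2) (2 * (z - Λ)) z := by
      have := ((hasDerivAt_id z).sub_const Λ).pow 2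
      exact this.congr_deriv (by simp)
    have h2 : HasDerivAt (fun w : ℂ => 1 / (w - Λ) ^ 2) (-2 / (z - Λ) ^ 3) z := by
      simp only [one_div]
      have := h1.inv (pow_ne_zero 2 hzΛ)
      refine this.congr_deriv (Eq.symm ?_)
      rw [div_eq_div_iff (pow_ne_zero 3 hzΛ) (pow_ne_zero 2 (pow_ne_zero 2 hzΛ))]
      ring
    exact h2.sub_const (1 / Λ ^ 2)
lemma abs_sub_lower (a b : ℂ) : Complex.abs b - Complex.abs a ≤ Complex.abs (a - b) := by
  have h := norm_sub_norm_le b a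
  rw [norm_sub_rev] at h
  simpa [Complex.norm_eq_abs] using h

lemma tail_facts {R : ℝ} {z Λ : ℂ} (hz : Complex.abs z ≤ R) (hΛ : 2*R + 1 ≤ Complex.abs Λ)
    (hR : 0 ≤ R) :
    Complex.abs Λ / 2 ≤ Complex.abs (z - Λ) ∧ (1:ℝ) ≤ Complex.abs Λ ∧ Λ ≠ 0 ∧ z - Λ ≠ 0 := by
  have hA1 : (1:ℝ) ≤ Complex.abs Λ := by linarith
  have hA0 : (0:ℝ) < Complex.abs Λ := by linarith
  have hΛ0 : Λ ≠ 0 := Complex.abs.pos_iff.mp hA0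
  have hlow := abs_sub_lower z Λ
  have hB : Complex.abs Λ / 2 ≤ Complex.abs (z - Λ) := by linarith
  have hzΛ : z - Λ ≠ 0 := Complex.abs.pos_iff.mp (by linarith)
  exact ⟨hB, hA1, hΛ0, hzΛ⟩

lemma bound_zt {R : ℝ} {z Λ : ℂ} (hz : Complex.abs z ≤ R) (hΛ : 2*R + 1 ≤ Complex.abs Λ)
    (hR : 0 ≤ R) :
    Complex.abs (1/(z - Λ) + 1/Λ + z/Λ^2) ≤ 2*R^2 * (Complex.abs Λ)⁻¹^3 := by
  obtain ⟨hB, hA1, hΛ0, hzΛ⟩ := tail_facts hz hΛ hR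
  have hA0 : (0:ℝ) < Complex.abs Λ := by linarith
  have hid : 1/(z - Λ) + 1/Λ + z/Λ^2 = z^2 / ((z - Λ) * Λ^2) := by
    field_simp
    ring
  rw [hid, map_div₀, map_mul, map_pow, map_pow]
  have hnum : Complex.abs z ^ 2 ≤ R ^ 2 := by nlinarith [Complex.abs.nonneg z]
  have hden : Complex.abs Λ / 2 * Complex.abs Λ ^ 2 ≤
      Complex.abs (z - Λ) * Complex.abs Λ ^ 2 :=
    mul_le_mul_of_nonneg_right hB (by positivity)
  calc Complex.abs z ^ 2 / (Complex.abs (z - Λ) * Complex.abs Λ ^ 2)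
      ≤ R ^ 2 / (Complex.abs Λ / 2 * Complex.abs Λ ^ 2) :=
        div_le_div₀ (by positivity) hnum (by positivity) hden
    _ = 2*R^2 * (Complex.abs Λ)⁻¹^3 := by
        field_simp

lemma bound_pt {R : ℝ} {z Λ : ℂ} (hz : Complex.abs z ≤ R) (hΛ : 2*R + 1 ≤ Complex.abs Λ)
    (hR : 0 ≤ R) :
    Complex.abs (1/(z - Λ)^2 - 1/Λ^2) ≤ 12*R * (Complex.abs Λ)⁻¹^3 := by
  obtain ⟨hB, hA1, hΛ0, hzΛ⟩ := tail_facts hz hΛ hR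
  have hA0 : (0:ℝ) < Complex.abs Λ := by linarith
  have hRA : R ≤ Complex.abs Λ := by linarith
  have hid : 1/(z - Λ)^2 - 1/Λ^2 = z * (2*Λ - z) / ((z - Λ)^2 * Λ^2) := by
    field_simp
    ring
  rw [hid, map_div₀, map_mul, map_mul, map_pow, map_pow]
  have hnum2 : Complex.abs (2*Λ - z) ≤ 3 * Complex.abs Λ := by
    calc Complex.abs (2*Λ - z) ≤ Complex.abs (2*Λ) + Complex.abs z := by
          rw [sub_eq_add_neg]
          exact (Complex.abs.add_le _ _).trans (by rw [map_neg_eq_map])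
      _ ≤ 2 * Complex.abs Λ + R := by
          rw [map_mul]
          simp only [Complex.abs_ofNat]
          linarith
      _ ≤ 3 * Complex.abs Λ := by linarith
  have hnum : Complex.abs z * Complex.abs (2*Λ - z) ≤ R * (3 * Complex.abs Λ) :=
    mul_le_mul hz hnum2 (Complex.abs.nonneg _) hR
  have hden : (Complex.abs Λ / 2)^2 * Complex.abs Λ ^ 2 ≤
      Complex.abs (z - Λ) ^ 2 * Complex.abs Λ ^ 2 := by
    have := pow_le_pow_left₀ (by positivity) hB 2
    exact mul_le_mul_of_nonneg_right this (by positivity)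
  calc Complex.abs z * Complex.abs (2*Λ - z) / (Complex.abs (z - Λ) ^ 2 * Complex.abs Λ ^ 2)
      ≤ R * (3 * Complex.abs Λ) / ((Complex.abs Λ / 2)^2 * Complex.abs Λ ^ 2) :=
        div_le_div₀ (by positivity) hnum (by positivity) hden
    _ = 12*R * (Complex.abs Λ)⁻¹^3 := by
        field_simp
        ring

lemma bound_q {R : ℝ} {z Λ : ℂ} (hz : Complex.abs z ≤ R) (hΛ : 2*R + 1 ≤ Complex.abs Λ)
    (hR : 0 ≤ R) :
    Complex.abs (-2 / (z - Λ)^3) ≤ 16 * (Complex.abs Λ)⁻¹^3 := by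
  obtain ⟨hB, hA1, hΛ0, hzΛ⟩ := tail_facts hz hΛ hR
  have hA0 : (0:ℝ) < Complex.abs Λ := by linarith
  rw [map_div₀, map_neg_eq_map, map_pow]
  have hden : (Complex.abs Λ / 2)^3 ≤ Complex.abs (z - Λ) ^ 3 :=
    pow_le_pow_left₀ (by positivity) hB 3
  calc Complex.abs 2 / Complex.abs (z - Λ) ^ 3
      ≤ 2 / ((Complex.abs Λ / 2)^3) := by
        apply div_le_div₀ (by positivity) (by simp) (by positivity) hden
    _ = 16 * (Complex.abs Λ)⁻¹^3 := by
        field_simp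
        ring
lemma abs_le_R {z w : ℂ} {ε : ℝ} (hε1 : ε ≤ 1) (hw : w ∈ Metric.closedBall z ε) :
    Complex.abs w ≤ Complex.abs z + 1 := by
  rw [Metric.mem_closedBall, Complex.dist_eq, Complex.norm_eq_abs] at hw
  calc Complex.abs w = Complex.abs (z + (w - z)) := by ring_nf
    _ ≤ Complex.abs z + Complex.abs (w - z) := Complex.abs.add_le _ _
    _ ≤ Complex.abs z + 1 := by linarith

lemma latticePt_zero (τ : ℂ) : latticePt τ (0 : ℤ × ℤ) = 0 := by simp [latticePt]

lemma ne_zero_of_abs_large {τ : ℂ} {ω : ℤ × ℤ} {K : ℝ} (hK : 0 < K)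
    (h : K ≤ Complex.abs (latticePt τ ω)) : ω ≠ 0 := by
  intro h0
  rw [h0, latticePt_zero, map_zero] at h
  linarith

lemma abs_z_le_R (z : ℂ) : Complex.abs z ≤ Complex.abs z + 1 := by linarith

/-- Summability of the `ζ` summands at a non-lattice point. -/
lemma summable_zt {τ : ℂ} (hτ : 0 < τ.im) {z : ℂ} (hz : z ∈ U τ) :
    Summable (fun ω => zt τ ω z) := by
  set R : ℝ := Complex.abs z + 1 with hR
  have hR0 : (0:ℝ) ≤ R := by positivity
  apply Summable.of_norm_bounded_eventually (g := fun ω => 2*R^2 * (Complex.abs (latticePt τ ω))⁻¹^3)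
    ((summable_master hτ).mul_left _)
  rw [Filter.eventually_cofinite]
  apply Set.Finite.subset (finite_small hτ (2*R+1))
  intro ω hω
  simp only [Set.mem_setOf_eq] at hω ⊢
  by_contra hcon
  push_neg at hcon
  apply hω
  have h0 : ω ≠ 0 := ne_zero_of_abs_large (by positivity) hcon.le
  have hzt : zt τ ω z = 1/(z - latticePt τ ω) + 1/(latticePt τ ω) + z/(latticePt τ ω)^2 := by
    simp only [zt, if_neg h0]
  rw [Complex.norm_eq_abs, hzt]
  exact bound_zt (abs_z_le_R z) hcon.le hR0

/-- Summability of the `℘` summands at a non-lattice point. -/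
lemma summable_pt {τ : ℂ} (hτ : 0 < τ.im) {z : ℂ} (hz : z ∈ U τ) :
    Summable (fun ω => pt τ ω z) := by
  set R : ℝ := Complex.abs z + 1 with hR
  have hR0 : (0:ℝ) ≤ R := by positivity
  apply Summable.of_norm_bounded_eventually (g := fun ω => 12*R * (Complex.abs (latticePt τ ω))⁻¹^3)
    ((summable_master hτ).mul_left _)
  rw [Filter.eventually_cofinite]
  apply Set.Finite.subset (finite_small hτ (2*R+1))
  intro ω hω
  simp only [Set.mem_setOf_eq] at hω ⊢
  by_contra hcon
  push_neg at hcon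
  apply hω
  have h0 : ω ≠ 0 := ne_zero_of_abs_large (by positivity) hcon.le
  have hpt : pt τ ω z = 1/(z - latticePt τ ω)^2 - 1/(latticePt τ ω)^2 := by
    simp only [pt, if_neg h0]
  rw [Complex.norm_eq_abs, hpt]
  exact bound_pt (abs_z_le_R z) hcon.le hR0

/-- Summability of the full `℘'` summands at a non-lattice point. -/
lemma summable_q {τ : ℂ} (hτ : 0 < τ.im) (z : ℂ) :
    Summable (fun ω => -2 / (z - latticePt τ ω)^3) := by
  set R : ℝ := Complex.abs z + 1 with hR
  have hR0 : (0:ℝ) ≤ R := by positivity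
  apply Summable.of_norm_bounded_eventually (g := fun ω => 16 * (Complex.abs (latticePt τ ω))⁻¹^3)
    ((summable_master hτ).mul_left _)
  rw [Filter.eventually_cofinite]
  apply Set.Finite.subset (finite_small hτ (2*R+1))
  intro ω hω
  simp only [Set.mem_setOf_eq] at hω ⊢
  by_contra hcon
  push_neg at hcon
  apply hω
  rw [Complex.norm_eq_abs]
  exact bound_q (abs_z_le_R z) hcon.le hR0

/-- Termwise differentiation: the `ζ`-sum has derivative the negated `℘`-sum. -/
lemma hasDerivAt_zsum {τ : ℂ} (hτ : 0 < τ.im) {z : ℂ} (hz : z ∈ U τ) :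
    HasDerivAt (fun w => ∑' ω, zt τ ω w) (∑' ω, -(pt τ ω z)) z := by
  obtain ⟨δ, hδ, hδb⟩ := exists_delta hτ
  obtain ⟨ε, hε, hε1, hball⟩ := nice_ball hτ hz
  set R : ℝ := Complex.abs z + 1 with hR
  have hR0 : (0:ℝ) ≤ R := by positivity
  set u : ℤ × ℤ → ℝ := fun ω =>
    if Complex.abs (latticePt τ ω) ≤ 2*R+1 then 1/ε^2 + 1/δ^2
    else 12*R * (Complex.abs (latticePt τ ω))⁻¹^3 with hu_def
  have hu_nonneg : ∀ ω, 0 ≤ u ω := by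
    intro ω
    rw [hu_def]
    dsimp only
    split <;> positivity
  have hu : Summable u := by
    apply Summable.of_norm_bounded_eventually
      (g := fun ω => 12*R * (Complex.abs (latticePt τ ω))⁻¹^3) ((summable_master hτ).mul_left _)
    rw [Filter.eventually_cofinite]
    apply Set.Finite.subset (finite_small hτ (2*R+1))
    intro ω hω
    simp only [Set.mem_setOf_eq] at hω ⊢
    by_contra hcon
    push_neg at hcon
    apply hω
    rw [hu_def]
    dsimp only
    simp only [if_neg (not_le.2 hcon)]
    rw [Real.norm_of_nonneg (by positivity)]
  have hUball : ∀ w ∈ Metric.ball z ε, w ∈ U τ := by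
    intro w hw ω heq
    have := hball w (Metric.ball_subset_closedBall hw) ω
    rw [heq, sub_self, map_zero] at this
    linarith
  have hg : ∀ ω w, w ∈ Metric.ball z ε → HasDerivAt (zt τ ω) (-(pt τ ω w)) w :=
    fun ω w hw => hasDerivAt_zt ω (hUball w hw) hτ
  have hb : ∀ ω w, w ∈ Metric.ball z ε → ‖-(pt τ ω w)‖ ≤ u ω := by
    intro ω w hw
    rw [norm_neg]
    by_cases h0 : ω = 0
    · subst h0
      have : pt τ 0 w = 0 := by simp [pt]
      rw [this, norm_zero]
      exact hu_nonneg _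
    set Λ := latticePt τ ω with hΛdef
    have hwb : Complex.abs w ≤ R := by
      have := abs_le_R hε1 (Metric.ball_subset_closedBall hw)
      exact this
    have hεw : ε ≤ Complex.abs (w - Λ) := hball w (Metric.ball_subset_closedBall hw) ω
    have hpt : pt τ ω w = 1/(w - Λ)^2 - 1/Λ^2 := by simp only [pt, if_neg h0, hΛdef]
    rw [Complex.norm_eq_abs, hpt, hu_def]
    dsimp only
    split
    · -- near terms: crude bound
      rename_i hnear
      have hδΛ : δ ≤ Complex.abs Λ := delta_le hδ hδb h0
      have h1 : Complex.abs (1/(w-Λ)^2) ≤ 1/ε^2 := by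
        rw [map_div₀, map_one, map_pow]
        apply div_le_div₀ (by positivity) le_rfl (by positivity)
        exact pow_le_pow_left₀ hε.le hεw 2
      have h2 : Complex.abs (1/Λ^2) ≤ 1/δ^2 := by
        rw [map_div₀, map_one, map_pow]
        apply div_le_div₀ (by positivity) le_rfl (by positivity)
        exact pow_le_pow_left₀ hδ.le hδΛ 2
      calc Complex.abs (1/(w-Λ)^2 - 1/Λ^2)
          ≤ Complex.abs (1/(w-Λ)^2) + Complex.abs (1/Λ^2) := by
            rw [sub_eq_add_neg]
            exact (Complex.abs.add_le _ _).trans (by rw [map_neg_eq_map])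
        _ ≤ 1/ε^2 + 1/δ^2 := add_le_add h1 h2
    · rename_i hfar
      push_neg at hfar
      exact bound_pt hwb hfar.le hR0
  exact hasDerivAt_tsum_of_isPreconnected hu Metric.isOpen_ball
    (convex_ball z ε).isPreconnected hg hb (Metric.mem_ball_self hε)
    (summable_zt hτ hz) (Metric.mem_ball_self hε)

/-- Termwise differentiation for the `℘`-sum. -/
lemma hasDerivAt_psum {τ : ℂ} (hτ : 0 < τ.im) {z : ℂ} (hz : z ∈ U τ) :
    HasDerivAt (fun w => ∑' ω, pt τ ω w) (∑' ω, pt' τ ω z) z := by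
  obtain ⟨δ, hδ, hδb⟩ := exists_delta hτ
  obtain ⟨ε, hε, hε1, hball⟩ := nice_ball hτ hz
  set R : ℝ := Complex.abs z + 1 with hR
  have hR0 : (0:ℝ) ≤ R := by positivity
  set u : ℤ × ℤ → ℝ := fun ω =>
    if Complex.abs (latticePt τ ω) ≤ 2*R+1 then 2/ε^3
    else 16 * (Complex.abs (latticePt τ ω))⁻¹^3 with hu_def
  have hu_nonneg : ∀ ω, 0 ≤ u ω := by
    intro ω
    rw [hu_def]
    dsimp only
    split <;> positivity
  have hu : Summable u := by
    apply Summable.of_norm_bounded_eventually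
      (g := fun ω => 16 * (Complex.abs (latticePt τ ω))⁻¹^3) ((summable_master hτ).mul_left _)
    rw [Filter.eventually_cofinite]
    apply Set.Finite.subset (finite_small hτ (2*R+1))
    intro ω hω
    simp only [Set.mem_setOf_eq] at hω ⊢
    by_contra hcon
    push_neg at hcon
    apply hω
    rw [hu_def]
    dsimp only
    simp only [if_neg (not_le.2 hcon)]
    rw [Real.norm_of_nonneg (by positivity)]
  have hUball : ∀ w ∈ Metric.ball z ε, w ∈ U τ := by
    intro w hw ω heq
    have := hball w (Metric.ball_subset_closedBall hw) ω
    rw [heq, sub_self, map_zero] at this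
    linarith
  have hg : ∀ ω w, w ∈ Metric.ball z ε → HasDerivAt (pt τ ω) (pt' τ ω w) w :=
    fun ω w hw => hasDerivAt_pt ω (hUball w hw) hτ
  have hb : ∀ ω w, w ∈ Metric.ball z ε → ‖pt' τ ω w‖ ≤ u ω := by
    intro ω w hw
    by_cases h0 : ω = 0
    · subst h0
      have : pt' τ 0 w = 0 := by simp [pt']
      rw [this, norm_zero]
      exact hu_nonneg _
    set Λ := latticePt τ ω with hΛdef
    have hwb : Complex.abs w ≤ R := abs_le_R hε1 (Metric.ball_subset_closedBall hw)
    have hεw : ε ≤ Complex.abs (w - Λ) := hball w (Metric.ball_subset_closedBall hw) ω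
    have hpt : pt' τ ω w = -2/(w - Λ)^3 := by simp only [pt', if_neg h0, hΛdef]
    rw [Complex.norm_eq_abs, hpt, hu_def]
    dsimp only
    split
    · rename_i hnear
      rw [map_div₀, map_neg_eq_map, map_pow]
      have : Complex.abs 2 = 2 := by simp
      rw [this]
      apply div_le_div₀ (by positivity) le_rfl (by positivity)
      exact pow_le_pow_left₀ hε.le hεw 3
    · rename_i hfar
      push_neg at hfar
      exact bound_q hwb hfar.le hR0
  exact hasDerivAt_tsum_of_isPreconnected hu Metric.isOpen_ball
    (convex_ball z ε).isPreconnected hg hb (Metric.mem_ball_self hε)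
    (summable_pt hτ hz) (Metric.mem_ball_self hε)
def wpd (τ z : ℂ) : ℂ := ∑' ω : ℤ × ℤ, -2 / (z - latticePt τ ω) ^ 3

lemma hasDerivAt_wzeta {τ : ℂ} (hτ : 0 < τ.im) {z : ℂ} (hz : z ∈ U τ) :
    HasDerivAt (wzeta τ) (-(wp τ z)) z := by
  have h0 : z ≠ 0 := U_ne_zero hz
  have h1 : HasDerivAt (fun w : ℂ => 1 / w) (-1 / z ^ 2) z := by
    simp only [one_div]
    have := hasDerivAt_inv h0
    exact this.congr_deriv (by ring)
  have h2 := hasDerivAt_zsum hτ hz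
  have h3 := h1.add h2
  have hfun : wzeta τ = fun w => 1 / w + ∑' ω, zt τ ω w := rfl
  rw [hfun]
  refine h3.congr_deriv (Eq.symm ?_)
  rw [tsum_neg]
  show -(1 / z ^ 2 + ∑' ω, pt τ ω z) = _
  ring

lemma hasDerivAt_wp {τ : ℂ} (hτ : 0 < τ.im) {z : ℂ} (hz : z ∈ U τ) :
    HasDerivAt (wp τ) (wpd τ z) z := by
  have h0 : z ≠ 0 := U_ne_zero hz
  have h1 : HasDerivAt (fun w : ℂ => 1 / w ^ 2) (-2 / z ^ 3) z := by
    simp only [one_div]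
    have := (hasDerivAt_pow 2 z).inv (pow_ne_zero 2 h0)
    refine this.congr_deriv (Eq.symm ?_)
    rw [div_eq_div_iff (pow_ne_zero 3 h0) (pow_ne_zero 2 (pow_ne_zero 2 h0))]
    norm_num
    ring
  have h2 := hasDerivAt_psum hτ hz
  have h3 := h1.add h2
  have hfun : wp τ = fun w => 1 / w ^ 2 + ∑' ω, pt τ ω w := rfl
  rw [hfun]
  refine h3.congr_deriv (Eq.symm ?_)
  have hq := summable_q hτ z
  have := Summable.tsum_eq_add_tsum_ite hq 0
  rw [wpd, this, latticePt_zero, sub_zero]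
  congr 1

lemma wpDeriv_eq_wpd {τ : ℂ} (hτ : 0 < τ.im) {z : ℂ} (hz : z ∈ U τ) :
    wpDeriv τ z = wpd τ z := (hasDerivAt_wp hτ hz).deriv

lemma pt_neg (τ : ℂ) (ω : ℤ × ℤ) (z : ℂ) : pt τ (-ω) (-z) = pt τ ω z := by
  simp only [pt, neg_eq_zero, latticePt_neg]
  split_ifs with h
  · rfl
  · rw [show -z - -latticePt τ ω = -(z - latticePt τ ω) by ring, neg_pow,
      show (-latticePt τ ω) ^ 2 = latticePt τ ω ^ 2 by ring]
    simp

lemma zt_neg (τ : ℂ) (ω : ℤ × ℤ) (z : ℂ) : zt τ (-ω) (-z) = -(zt τ ω z) := by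
  simp only [zt, neg_eq_zero, latticePt_neg]
  split_ifs with h
  · simp
  · rw [show -z - -latticePt τ ω = -(z - latticePt τ ω) by ring,
      show (-latticePt τ ω) ^ 2 = latticePt τ ω ^ 2 by ring,
      div_neg, div_neg, neg_div]
    ring

lemma wp_even (τ z : ℂ) : wp τ (-z) = wp τ z := by
  show 1 / (-z) ^ 2 + ∑' ω, pt τ ω (-z) = 1 / z ^ 2 + ∑' ω, pt τ ω z
  have h1 : ∑' ω : ℤ × ℤ, pt τ ω (-z) = ∑' ω : ℤ × ℤ, pt τ (-ω) (-z) :=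
    ((Equiv.neg (ℤ × ℤ)).tsum_eq (fun ω => pt τ ω (-z))).symm
  rw [h1]
  have h2 : ∀ ω : ℤ × ℤ, pt τ (-ω) (-z) = pt τ ω z := fun ω => pt_neg τ ω z
  rw [tsum_congr h2, neg_pow]
  simp

lemma wzeta_odd (τ z : ℂ) : wzeta τ (-z) = -wzeta τ z := by
  show 1 / (-z) + ∑' ω, zt τ ω (-z) = -(1 / z + ∑' ω, zt τ ω z)
  have h1 : ∑' ω : ℤ × ℤ, zt τ ω (-z) = ∑' ω : ℤ × ℤ, zt τ (-ω) (-z) :=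
    ((Equiv.neg (ℤ × ℤ)).tsum_eq (fun ω => zt τ ω (-z))).symm
  rw [h1, tsum_congr (fun ω => zt_neg τ ω z), tsum_neg]
  rw [div_neg]
  ring

lemma wpd_periodic (τ : ℂ) (e : ℤ × ℤ) (z : ℂ) :
    wpd τ (z + latticePt τ e) = wpd τ z := by
  unfold wpd
  have h := (Equiv.addRight e).tsum_eq
    (fun ω => -2 / ((z + latticePt τ e) - latticePt τ ω) ^ 3)
  rw [← h]
  apply tsum_congr
  intro ω
  simp only [Equiv.coe_addRight, latticePt_add]
  congr 2
  ring

lemma const_of_deriv_zero {V : Set ℂ} (hV : IsOpen V) (hc : IsPreconnected V)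
    (f : ℂ → ℂ) (hf : ∀ z ∈ V, HasDerivAt f 0 z) {x y : ℂ} (hx : x ∈ V) (hy : y ∈ V) :
    f x = f y := by
  have hloc : ∀ z ∈ V, ∀ᶠ w in nhds z, f w = f z := by
    intro z hz
    obtain ⟨ε, hε, hball⟩ := Metric.isOpen_iff.1 hV z hz
    have hconst : ∀ w ∈ Metric.ball z ε, f w = f z := by
      intro w hw
      refine Convex.is_const_of_fderivWithin_eq_zero (𝕜 := ℂ) (convex_ball z ε)
        (fun v hv => ((hf v (hball hv)).differentiableAt).differentiableWithinAt)
        (fun v hv => ?_) hw (Metric.mem_ball_self hε)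
      rw [fderivWithin_of_isOpen Metric.isOpen_ball hv]
      have h1 := (hf v (hball hv)).hasFDerivAt.fderiv
      rw [h1]
      ext
      simp
    filter_upwards [Metric.ball_mem_nhds z hε] with w hw using hconst w hw
  by_contra hne
  set Vgood := {z | z ∈ V ∧ f z = f y} with hVg
  set Vbad := {z | z ∈ V ∧ f z ≠ f y} with hVb
  have hog : IsOpen Vgood := by
    rw [isOpen_iff_mem_nhds]
    intro z hz
    filter_upwards [hV.mem_nhds hz.1, hloc z hz.1] with w hwV hwf
    exact ⟨hwV, hwf.trans hz.2⟩
  have hob : IsOpen Vbad := by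
    rw [isOpen_iff_mem_nhds]
    intro z hz
    filter_upwards [hV.mem_nhds hz.1, hloc z hz.1] with w hwV hwf
    exact ⟨hwV, by rw [hwf]; exact hz.2⟩
  have hsub : V ⊆ Vgood ∪ Vbad := by
    intro z hz
    by_cases h : f z = f y
    · exact Or.inl ⟨hz, h⟩
    · exact Or.inr ⟨hz, h⟩
  have h1 : (V ∩ Vgood).Nonempty := ⟨y, hy, hy, rfl⟩
  have h2 : (V ∩ Vbad).Nonempty := ⟨x, hx, hx, hne⟩
  obtain ⟨w, _, hwg, hwb⟩ := hc Vgood Vbad hog hob hsub h1 h2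
  exact hwb.2 hwg.2
lemma wp_periodic_gen {τ : ℂ} (hτ : 0 < τ.im) {e : ℤ × ℤ}
    (he : latticePt τ e / 2 ∈ U τ) :
    ∀ z ∈ U τ, wp τ (z + latticePt τ e) = wp τ z := by
  set Λe := latticePt τ e with hΛe
  set F : ℂ → ℂ := fun z => wp τ (z + Λe) - wp τ z with hF
  have hFderiv : ∀ z ∈ U τ, HasDerivAt F 0 z := by
    intro z hz
    have h1 : HasDerivAt (fun w => wp τ (w + Λe)) (wpd τ (z + Λe)) z := by
      have ha := hasDerivAt_wp hτ (U_add hz e)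
      have h2 := ha.comp z ((hasDerivAt_id z).add_const Λe)
      exact h2.congr_deriv (by simp [hΛe])
    have h2 := hasDerivAt_wp hτ hz
    have h3 := h1.sub h2
    refine h3.congr_deriv (Eq.symm ?_)
    rw [hΛe, wpd_periodic]
    ring
  intro z hz
  have hmem : -Λe / 2 ∈ U τ := by
    have h' := U_neg he
    rw [show -(Λe / 2) = -Λe / 2 by ring] at h'
    exact h'
  have hc := const_of_deriv_zero (isOpen_U hτ) (preconnected_U τ) F hFderiv hz hmem
  have hval : F (-Λe / 2) = 0 := by
    rw [hF]
    dsimp only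
    rw [show -Λe / 2 + Λe = Λe / 2 by ring, show (-Λe / 2 : ℂ) = -(Λe / 2) by ring, wp_even]
    ring
  have : F z = 0 := hc.trans hval
  exact sub_eq_zero.1 this

lemma wzeta_quasi_gen {τ : ℂ} (hτ : 0 < τ.im) {e : ℤ × ℤ}
    (he : latticePt τ e / 2 ∈ U τ) :
    ∀ z ∈ U τ, wzeta τ (z + latticePt τ e) =
      wzeta τ z + 2 * wzeta τ (latticePt τ e / 2) := by
  set Λe := latticePt τ e with hΛe
  set G : ℂ → ℂ := fun z => wzeta τ (z + Λe) - wzeta τ z with hG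
  have hGderiv : ∀ z ∈ U τ, HasDerivAt G 0 z := by
    intro z hz
    have h1 : HasDerivAt (fun w => wzeta τ (w + Λe)) (-(wp τ (z + Λe))) z := by
      have ha := hasDerivAt_wzeta hτ (U_add hz e)
      have h2 := ha.comp z ((hasDerivAt_id z).add_const Λe)
      exact h2.congr_deriv (by simp [hΛe])
    have h2 := hasDerivAt_wzeta hτ hz
    have h3 := h1.sub h2
    refine h3.congr_deriv (Eq.symm ?_)
    rw [hΛe, wp_periodic_gen hτ he z hz]
    ring
  intro z hz
  have hmem : -Λe / 2 ∈ U τ := by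
    have h' := U_neg he
    rw [show -(Λe / 2) = -Λe / 2 by ring] at h'
    exact h'
  have hc := const_of_deriv_zero (isOpen_U hτ) (preconnected_U τ) G hGderiv hz hmem
  have hval : G (-Λe / 2) = 2 * wzeta τ (Λe / 2) := by
    rw [hG]
    dsimp only
    rw [show -Λe / 2 + Λe = Λe / 2 by ring, show (-Λe / 2 : ℂ) = -(Λe / 2) by ring, wzeta_odd]
    ring
  have hz' : G z = 2 * wzeta τ (Λe / 2) := hc.trans hval
  have : wzeta τ (z + Λe) - wzeta τ z = 2 * wzeta τ (Λe / 2) := hz'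
  linear_combination this

lemma half_mem_U {τ : ℂ} (hτ : 0 < τ.im) {p q : ℤ} (h : ¬(2 ∣ p ∧ 2 ∣ q)) :
    latticePt τ (p, q) / 2 ∈ U τ := by
  intro ω heq
  apply h
  have heq2 : latticePt τ (p, q) = 2 * latticePt τ ω := by
    rw [← heq]; ring
  have h3 : latticePt τ ((2 * ω.1, 2 * ω.2) : ℤ × ℤ) = 2 * latticePt τ ω := by
    simp only [latticePt]
    push_cast
    ring
  have := latticePt_inj hτ (heq2.trans h3.symm)
  have hp : p = 2 * ω.1 := by
    have := congrArg Prod.fst this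
    simpa using this
  have hq : q = 2 * ω.2 := by
    have := congrArg Prod.snd this
    simpa using this
  exact ⟨⟨ω.1, hp⟩, ⟨ω.2, hq⟩⟩

lemma latticePt_m0 (τ : ℂ) (m : ℤ) : latticePt τ (m, 0) = (m : ℂ) := by simp [latticePt]

lemma latticePt_0n (τ : ℂ) (n : ℤ) : latticePt τ (0, n) = (n : ℂ) * τ := by simp [latticePt]

lemma quasi_eta1 {τ : ℂ} (hτ : 0 < τ.im) {z : ℂ} (hz : z ∈ U τ) :
    wzeta τ (z + 1) = wzeta τ z + eta1 τ := by
  have he : latticePt τ ((1, 0) : ℤ × ℤ) / 2 ∈ U τ :=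
    half_mem_U hτ (by intro ⟨h1, _⟩; omega)
  have := wzeta_quasi_gen hτ he z hz
  rw [latticePt_m0] at this
  simpa [eta1] using this

lemma quasi_eta2 {τ : ℂ} (hτ : 0 < τ.im) {z : ℂ} (hz : z ∈ U τ) :
    wzeta τ (z + τ) = wzeta τ z + eta2 τ := by
  have he : latticePt τ ((0, 1) : ℤ × ℤ) / 2 ∈ U τ :=
    half_mem_U hτ (by intro ⟨_, h1⟩; omega)
  have := wzeta_quasi_gen hτ he z hz
  rw [latticePt_0n] at this
  simpa [eta2] using this

lemma wzeta_shift_m {τ : ℂ} (hτ : 0 < τ.im) (m : ℤ) :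
    ∀ z ∈ U τ, wzeta τ (z + (m : ℂ)) = wzeta τ z + (m : ℂ) * eta1 τ := by
  induction m using Int.induction_on with
  | zero => intro z hz; simp
  | succ k ih =>
    intro z hz
    have hzk : z + (k : ℂ) ∈ U τ := by
      have := U_add hz (k, 0)
      rwa [latticePt_m0] at this
    have h1 := quasi_eta1 hτ hzk
    have ihz := ih z hz
    push_cast at ihz h1 ⊢
    rw [show z + ((k : ℂ) + 1) = z + (k : ℂ) + 1 by ring]
    linear_combination h1 + ihz
  | pred k ih =>
    intro z hz
    have hw : z + -((k:ℂ) + 1) ∈ U τ := by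
      have h' := U_add hz (-((k:ℤ) + 1), 0)
      rw [latticePt_m0] at h'
      convert h' using 2
      push_cast
      ring
    have h1 := quasi_eta1 hτ hw
    have ihz := ih z hz
    push_cast at ihz h1 ⊢
    rw [show z + -((k:ℂ) + 1) + 1 = z + -(k:ℂ) by ring] at h1
    rw [show z + (-(k:ℂ) - 1) = z + -((k:ℂ) + 1) by ring]
    linear_combination ihz - h1

lemma wzeta_shift_n {τ : ℂ} (hτ : 0 < τ.im) (n : ℤ) :
    ∀ z ∈ U τ, wzeta τ (z + (n : ℂ) * τ) = wzeta τ z + (n : ℂ) * eta2 τ := by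
  induction n using Int.induction_on with
  | zero => intro z hz; simp
  | succ k ih =>
    intro z hz
    have hzk : z + (k : ℂ) * τ ∈ U τ := by
      have := U_add hz (0, k)
      rwa [latticePt_0n] at this
    have h1 := quasi_eta2 hτ hzk
    have ihz := ih z hz
    push_cast at ihz h1 ⊢
    rw [show z + ((k : ℂ) + 1) * τ = z + (k : ℂ) * τ + τ by ring]
    linear_combination h1 + ihz
  | pred k ih =>
    intro z hz
    have hw : z + -(((k:ℂ) + 1) * τ) ∈ U τ := by
      have h' := U_add hz (0, -((k:ℤ) + 1))
      rw [latticePt_0n] at h'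
      convert h' using 2
      push_cast
      ring
    have h1 := quasi_eta2 hτ hw
    have ihz := ih z hz
    push_cast at ihz h1 ⊢
    rw [show z + -(((k:ℂ) + 1) * τ) + τ = z + -(k:ℂ) * τ by ring] at h1
    rw [show z + (-(k:ℂ) - 1) * τ = z + -(((k:ℂ) + 1) * τ) by ring]
    linear_combination ihz - h1

lemma wzeta_shift {τ : ℂ} (hτ : 0 < τ.im) (ω : ℤ × ℤ) {z : ℂ} (hz : z ∈ U τ) :
    wzeta τ (z + latticePt τ ω) =
      wzeta τ z + (ω.1 : ℂ) * eta1 τ + (ω.2 : ℂ) * eta2 τ := by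
  have hz2 : z + (ω.2 : ℂ) * τ ∈ U τ := by
    have := U_add hz (0, ω.2)
    rwa [latticePt_0n] at this
  have h1 := wzeta_shift_m hτ ω.1 (z + (ω.2 : ℂ) * τ) hz2
  have h2 := wzeta_shift_n hτ ω.2 z hz
  rw [show z + latticePt τ ω = z + (ω.2 : ℂ) * τ + (ω.1 : ℂ) by
    simp only [latticePt]; ring]
  rw [h1, h2]
  ring

lemma half_value {τ : ℂ} (hτ : 0 < τ.im) {p q : ℤ}
    (h : latticePt τ (p, q) / 2 ∈ U τ) :
    2 * wzeta τ (latticePt τ (p, q) / 2) = (p : ℂ) * eta1 τ + (q : ℂ) * eta2 τ := by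
  set w := latticePt τ (p, q) / 2 with hwdef
  have hnw : -w ∈ U τ := U_neg h
  have hs := wzeta_shift hτ (p, q) hnw
  rw [show -w + latticePt τ (p, q) = w by rw [hwdef]; ring] at hs
  rw [wzeta_odd] at hs
  dsimp only at hs
  linear_combination hs
/-- The index reindexing equivalence. -/
def sigmaEquiv (a b c d : ℤ) (hdet : a * d - b * c = 1) : (ℤ × ℤ) ≃ (ℤ × ℤ) where
  toFun ω := (ω.1 * d + ω.2 * b, ω.1 * c + ω.2 * a)
  invFun ω := (ω.1 * a - ω.2 * b, -(ω.1 * c) + ω.2 * d)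
  left_inv ω := by
    obtain ⟨m, n⟩ := ω
    refine Prod.ext ?_ ?_ <;> simp only
    · linear_combination m * hdet
    · linear_combination n * hdet
  right_inv ω := by
    obtain ⟨p, q⟩ := ω
    refine Prod.ext ?_ ?_ <;> simp only
    · linear_combination p * hdet
    · linear_combination q * hdet

lemma sigmaEquiv_zero (a b c d : ℤ) (hdet : a * d - b * c = 1) :
    sigmaEquiv a b c d hdet 0 = 0 := by
  simp [sigmaEquiv, Equiv.coe_fn_mk]

lemma sigmaEquiv_ne_zero (a b c d : ℤ) (hdet : a * d - b * c = 1) {ω : ℤ × ℤ}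
    (h : ω ≠ 0) : sigmaEquiv a b c d hdet ω ≠ 0 := by
  intro hc
  apply h
  have := (sigmaEquiv a b c d hdet).injective (hc.trans (sigmaEquiv_zero a b c d hdet).symm)
  exact this

lemma lam_ne_zero {a b c d : ℤ} (hdet : a * d - b * c = 1) {τ : ℂ} (hτ : 0 < τ.im) :
    (c : ℂ) * τ + d ≠ 0 := by
  intro h
  by_cases hc : c = 0
  · subst hc
    simp only [Int.cast_zero, zero_mul, zero_add] at h
    have hd : d = 0 := by exact_mod_cast h
    rw [hd] at hdet
    simp at hdet
  · have him := congrArg Complex.im h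
    simp only [Complex.add_im, Complex.mul_im, Complex.intCast_re, Complex.intCast_im,
      Complex.zero_im] at him
    have : (c : ℝ) * τ.im = 0 := by linarith
    have hc' : (c : ℝ) ≠ 0 := Int.cast_ne_zero.2 hc
    have := mul_eq_zero.1 this
    rcases this with h' | h'
    · exact hc' h'
    · linarith

lemma tau'_im {a b c d : ℤ} (hdet : a * d - b * c = 1) {τ : ℂ} (hτ : 0 < τ.im) :
    0 < (((a : ℂ) * τ + b) / ((c : ℂ) * τ + d)).im := by
  have hlam := lam_ne_zero hdet hτ
  rw [Complex.div_im]
  have hns : 0 < Complex.normSq ((c : ℂ) * τ + d) := by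
    rwa [Complex.normSq_pos]
  have hnum : ((a : ℂ) * τ + b).im * ((c : ℂ) * τ + d).re -
      ((a : ℂ) * τ + b).re * ((c : ℂ) * τ + d).im = τ.im := by
    simp only [Complex.add_im, Complex.add_re, Complex.mul_im, Complex.mul_re,
      Complex.intCast_re, Complex.intCast_im]
    have hdet' : (a : ℝ) * d - b * c = 1 := by exact_mod_cast hdet
    nlinarith [hdet']
  rw [div_sub_div_same, hnum]
  positivity

lemma latticePt_hom {a b c d : ℤ} (hdet : a * d - b * c = 1) {τ : ℂ} (hτ : 0 < τ.im)
    (ω : ℤ × ℤ) :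
    latticePt (((a : ℂ) * τ + b) / ((c : ℂ) * τ + d)) ω =
      latticePt τ (sigmaEquiv a b c d hdet ω) / ((c : ℂ) * τ + d) := by
  have hlam := lam_ne_zero hdet hτ
  rw [eq_div_iff hlam]
  simp only [latticePt, sigmaEquiv, Equiv.coe_fn_mk]
  push_cast
  rw [add_mul, mul_assoc, div_mul_cancel₀ _ hlam]
  ring
lemma one_div_scale {lam z : ℂ} (hlam : lam ≠ 0) : (1:ℂ)/z = lam * (1/(lam*z)) := by
  by_cases hz : z = 0
  · simp [hz]
  · field_simp

lemma one_div_sq_scale {lam z : ℂ} (hlam : lam ≠ 0) :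
    (1:ℂ)/z^2 = lam^2 * (1/(lam*z)^2) := by
  by_cases hz : z = 0
  · simp [hz]
  · field_simp

lemma zt_hom {a b c d : ℤ} (hdet : a * d - b * c = 1) {τ : ℂ} (hτ : 0 < τ.im)
    (z : ℂ) (ω : ℤ × ℤ) :
    zt (((a:ℂ)*τ+b)/((c:ℂ)*τ+d)) ω z
      = ((c:ℂ)*τ+d) * zt τ (sigmaEquiv a b c d hdet ω) (((c:ℂ)*τ+d) * z) := by
  set lam := (c:ℂ)*τ+d with hlamdef
  have hlam : lam ≠ 0 := lam_ne_zero hdet hτ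
  by_cases h0 : ω = 0
  · subst h0
    rw [sigmaEquiv_zero]
    simp [zt]
  · have hσ0 := sigmaEquiv_ne_zero a b c d hdet h0
    simp only [zt, if_neg h0, if_neg hσ0]
    rw [latticePt_hom hdet hτ ω]
    set Λ := latticePt τ (sigmaEquiv a b c d hdet ω) with hΛ
    rw [show z - Λ/lam = (lam*z - Λ)/lam by field_simp]
    rw [one_div_div, one_div_div, div_pow, div_div_eq_mul_div]
    ring

lemma pt_hom {a b c d : ℤ} (hdet : a * d - b * c = 1) {τ : ℂ} (hτ : 0 < τ.im)
    (z : ℂ) (ω : ℤ × ℤ) :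
    pt (((a:ℂ)*τ+b)/((c:ℂ)*τ+d)) ω z
      = ((c:ℂ)*τ+d)^2 * pt τ (sigmaEquiv a b c d hdet ω) (((c:ℂ)*τ+d) * z) := by
  set lam := (c:ℂ)*τ+d with hlamdef
  have hlam : lam ≠ 0 := lam_ne_zero hdet hτ
  by_cases h0 : ω = 0
  · subst h0
    rw [sigmaEquiv_zero]
    simp [pt]
  · have hσ0 := sigmaEquiv_ne_zero a b c d hdet h0
    simp only [pt, if_neg h0, if_neg hσ0]
    rw [latticePt_hom hdet hτ ω]
    set Λ := latticePt τ (sigmaEquiv a b c d hdet ω) with hΛ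
    rw [show z - Λ/lam = (lam*z - Λ)/lam by field_simp]
    rw [div_pow, div_pow, one_div_div, one_div_div]
    ring

lemma wzeta_hom {a b c d : ℤ} (hdet : a * d - b * c = 1) {τ : ℂ} (hτ : 0 < τ.im)
    (z : ℂ) :
    wzeta (((a:ℂ)*τ+b)/((c:ℂ)*τ+d)) z = ((c:ℂ)*τ+d) * wzeta τ (((c:ℂ)*τ+d) * z) := by
  set lam := (c:ℂ)*τ+d with hlamdef
  have hlam : lam ≠ 0 := lam_ne_zero hdet hτ
  show 1/z + ∑' ω, zt (((a:ℂ)*τ+b)/lam) ω z = lam * (1/(lam*z) + ∑' ω, zt τ ω (lam*z))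
  rw [mul_add]
  congr 1
  · exact one_div_scale hlam
  · calc ∑' ω, zt (((a:ℂ)*τ+b)/lam) ω z
        = ∑' ω, lam * zt τ (sigmaEquiv a b c d hdet ω) (lam*z) :=
          tsum_congr (fun ω => zt_hom hdet hτ z ω)
      _ = ∑' ω, lam * zt τ ω (lam*z) :=
          (sigmaEquiv a b c d hdet).tsum_eq (fun ω => lam * zt τ ω (lam*z))
      _ = lam * ∑' ω, zt τ ω (lam*z) := tsum_mul_left

lemma wp_hom {a b c d : ℤ} (hdet : a * d - b * c = 1) {τ : ℂ} (hτ : 0 < τ.im)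
    (z : ℂ) :
    wp (((a:ℂ)*τ+b)/((c:ℂ)*τ+d)) z = ((c:ℂ)*τ+d)^2 * wp τ (((c:ℂ)*τ+d) * z) := by
  set lam := (c:ℂ)*τ+d with hlamdef
  have hlam : lam ≠ 0 := lam_ne_zero hdet hτ
  show 1/z^2 + ∑' ω, pt (((a:ℂ)*τ+b)/lam) ω z
      = lam^2 * (1/(lam*z)^2 + ∑' ω, pt τ ω (lam*z))
  rw [mul_add]
  congr 1
  · exact one_div_sq_scale hlam
  · calc ∑' ω, pt (((a:ℂ)*τ+b)/lam) ω z
        = ∑' ω, lam^2 * pt τ (sigmaEquiv a b c d hdet ω) (lam*z) :=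
          tsum_congr (fun ω => pt_hom hdet hτ z ω)
      _ = ∑' ω, lam^2 * pt τ ω (lam*z) :=
          (sigmaEquiv a b c d hdet).tsum_eq (fun ω => lam^2 * pt τ ω (lam*z))
      _ = lam^2 * ∑' ω, pt τ ω (lam*z) := tsum_mul_left

lemma deriv_scale {f : ℂ → ℂ} {lam : ℂ} (hlam : lam ≠ 0) (z : ℂ) :
    deriv (fun w => f (lam * w)) z = lam * deriv f (lam * z) := by
  by_cases hd : DifferentiableAt ℂ f (lam * z)
  · have h1 := hd.hasDerivAt.comp z ((hasDerivAt_id z).const_mul lam)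
    simp only [mul_one] at h1
    have h2 : deriv (fun w => f (lam * w)) z = deriv f (lam * z) * lam := h1.deriv
    rw [h2]
    ring
  · have h1 : ¬ DifferentiableAt ℂ (fun w => f (lam * w)) z := by
      intro hc
    -- f = (fun w => f (lam * w)) ∘ (fun u => lam⁻¹ * u)
      have h2 : DifferentiableAt ℂ (fun u => lam⁻¹ * u) (lam * z) :=
        (differentiableAt_id.const_mul _)
      have h3 : DifferentiableAt ℂ ((fun w => f (lam * w)) ∘ (fun u => lam⁻¹ * u)) (lam * z) := by
        apply DifferentiableAt.comp
        · rw [show lam⁻¹ * (lam * z) = z by field_simp]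
          exact hc
        · exact h2
      have h4 : ((fun w => f (lam * w)) ∘ (fun u => lam⁻¹ * u)) = f := by
        funext u
        simp only [Function.comp_apply]
        rw [show lam * (lam⁻¹ * u) = u by field_simp]
      rw [h4] at h3
      exact hd h3
    rw [deriv_zero_of_not_differentiableAt hd, deriv_zero_of_not_differentiableAt h1, mul_zero]

lemma wpDeriv_hom {a b c d : ℤ} (hdet : a * d - b * c = 1) {τ : ℂ} (hτ : 0 < τ.im)
    (z : ℂ) :
    wpDeriv (((a:ℂ)*τ+b)/((c:ℂ)*τ+d)) z
      = ((c:ℂ)*τ+d)^3 * wpDeriv τ (((c:ℂ)*τ+d) * z) := by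
  set lam := (c:ℂ)*τ+d with hlamdef
  have hlam : lam ≠ 0 := lam_ne_zero hdet hτ
  show deriv (wp (((a:ℂ)*τ+b)/lam)) z = lam^3 * deriv (wp τ) (lam * z)
  have hfun : wp (((a:ℂ)*τ+b)/lam) = fun w => lam^2 * wp τ (lam * w) :=
    funext fun w => wp_hom hdet hτ w
  rw [hfun, deriv_const_mul_field, deriv_scale hlam]
  ring

lemma eta1_hom {a b c d : ℤ} (hdet : a * d - b * c = 1) {τ : ℂ} (hτ : 0 < τ.im) :
    eta1 (((a:ℂ)*τ+b)/((c:ℂ)*τ+d))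
      = ((c:ℂ)*τ+d) * ((d:ℂ) * eta1 τ + (c:ℂ) * eta2 τ) := by
  set lam := (c:ℂ)*τ+d with hlamdef
  have hlam : lam ≠ 0 := lam_ne_zero hdet hτ
  have hpar : ¬(2 ∣ d ∧ 2 ∣ c) := by
    rintro ⟨⟨d2, hd2⟩, ⟨c2, hc2⟩⟩
    have h2 : (2:ℤ) ∣ a * d - b * c := ⟨a * d2 - b * c2, by rw [hd2, hc2]; ring⟩
    rw [hdet] at h2
    norm_num at h2
  have hU := half_mem_U hτ (p := d) (q := c) hpar
  have hv := half_value hτ hU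
  have harg : lam * (1/2 : ℂ) = latticePt τ (d, c) / 2 := by
    simp only [latticePt]
    rw [hlamdef]
    ring
  rw [eta1, wzeta_hom hdet hτ, harg]
  rw [show (2:ℂ) * (lam * wzeta τ (latticePt τ (d, c) / 2))
      = lam * (2 * wzeta τ (latticePt τ (d, c) / 2)) by ring, hv]

lemma eta2_hom {a b c d : ℤ} (hdet : a * d - b * c = 1) {τ : ℂ} (hτ : 0 < τ.im) :
    eta2 (((a:ℂ)*τ+b)/((c:ℂ)*τ+d))
      = ((c:ℂ)*τ+d) * ((b:ℂ) * eta1 τ + (a:ℂ) * eta2 τ) := by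
  set lam := (c:ℂ)*τ+d with hlamdef
  have hlam : lam ≠ 0 := lam_ne_zero hdet hτ
  have hpar : ¬(2 ∣ b ∧ 2 ∣ a) := by
    rintro ⟨⟨b2, hb2⟩, ⟨a2, ha2⟩⟩
    have h2 : (2:ℤ) ∣ a * d - b * c := ⟨a2 * d - b2 * c, by rw [hb2, ha2]; ring⟩
    rw [hdet] at h2
    norm_num at h2
  have hU := half_mem_U hτ (p := b) (q := a) hpar
  have hv := half_value hτ hU
  have harg : lam * ((((a:ℂ)*τ+b)/lam) / 2) = latticePt τ (b, a) / 2 := by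
    simp only [latticePt]
    field_simp
    ring
  rw [eta2, wzeta_hom hdet hτ, harg]
  rw [show (2:ℂ) * (lam * wzeta τ (latticePt τ (b, a) / 2))
      = lam * (2 * wzeta τ (latticePt τ (b, a) / 2)) by ring, hv]

end

end Z2Aux

open Z2Aux in
/-- The modular transformation law (2.16) for `Z^{(2)}_{r,s}`: for
`γ = [[a,b],[c,d]] ∈ SL(2,ℤ)`, `τ' = γ·τ` and `(s',r') = (s,r)·γ⁻¹`, if `r + sτ ∉ Λ_τ` then
`r' + s'τ' ∉ Λ_{τ'}` and `Z^{(2)}_{r',s'}(τ') = (cτ+d)³ Z^{(2)}_{r,s}(τ)`. -/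
theorem Z2_modular (a b c d : ℤ) (hdet : a * d - b * c = 1) (τ : ℂ) (hτ : 0 < τ.im)
    (r s : ℂ) (hα : ¬InLattice τ (r + s * τ)) :
    ¬InLattice (((a : ℂ) * τ + b) / ((c : ℂ) * τ + d))
        ((r * a - s * b) + (s * d - r * c) * (((a : ℂ) * τ + b) / ((c : ℂ) * τ + d))) ∧
      Z2 (r * a - s * b) (s * d - r * c) (((a : ℂ) * τ + b) / ((c : ℂ) * τ + d))
        = ((c : ℂ) * τ + d) ^ 3 * Z2 r s τ := by
  have hlam : (c : ℂ) * τ + d ≠ 0 := lam_ne_zero hdet hτ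
  have hdetC : (a : ℂ) * (d : ℂ) - (b : ℂ) * (c : ℂ) = 1 := by exact_mod_cast hdet
  have hkey : ((c : ℂ) * τ + d) *
      ((r * a - s * b) + (s * d - r * c) * (((a : ℂ) * τ + b) / ((c : ℂ) * τ + d)))
      = r + s * τ := by
    field_simp
    linear_combination (r + s * τ) * hdetC
  constructor
  · rintro ⟨m, n, hmn⟩
    apply hα
    refine ⟨m * d + n * b, m * c + n * a, ?_⟩
    rw [← hkey, hmn]
    have hexp : ((c : ℂ) * τ + d) * ((m : ℂ) + (n : ℂ) * (((a : ℂ) * τ + b) / ((c : ℂ) * τ + d)))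
        = (m : ℂ) * ((c : ℂ) * τ + d) + (n : ℂ) * ((a : ℂ) * τ + b) := by
      field_simp
    rw [hexp]
    push_cast
    ring
  · have hZrs : Zrs (r * a - s * b) (s * d - r * c) (((a : ℂ) * τ + b) / ((c : ℂ) * τ + d))
        = ((c : ℂ) * τ + d) * Zrs r s τ := by
      unfold Zrs
      rw [wzeta_hom hdet hτ, hkey, eta1_hom hdet hτ, eta2_hom hdet hτ]
      linear_combination (-(((c : ℂ) * τ + d) * (r * eta1 τ + s * eta2 τ))) * hdetC
    have hwp : wp (((a : ℂ) * τ + b) / ((c : ℂ) * τ + d))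
        ((r * a - s * b) + (s * d - r * c) * (((a : ℂ) * τ + b) / ((c : ℂ) * τ + d)))
        = ((c : ℂ) * τ + d) ^ 2 * wp τ (r + s * τ) := by
      rw [wp_hom hdet hτ, hkey]
    have hwpD : wpDeriv (((a : ℂ) * τ + b) / ((c : ℂ) * τ + d))
        ((r * a - s * b) + (s * d - r * c) * (((a : ℂ) * τ + b) / ((c : ℂ) * τ + d)))
        = ((c : ℂ) * τ + d) ^ 3 * wpDeriv τ (r + s * τ) := by
      rw [wpDeriv_hom hdet hτ, hkey]
    unfold Z2
    rw [hZrs, hwp, hwpD]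
    ring
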